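/- Let A be the adjacency matrix of ER(n, k/(n-1)). Then with probability at least 1 - 1/n, the maximum-likelihood statistic T_1(A) = max over permutation matrices P_π of ⟨P_π B P_π^T, A⟩ satisfies T_1(A) ≤ (k/(n-1))·nk + 2√((k/(n-1))·nk·log n!) + (2/3)·log n!. -/

import Mathlib

open MeasureTheory ProbabilityTheory Real

/-- Ring distance between two nodes on the cycle `Z/nZ`. -/
def ringDist (n : ℕ) (i j : Fin n) : ℕ :=
  min ((i.val + n - j.val) % n) ((j.val + n - i.val) % n)

/-- Adjacency matrix of the ring lattice on `n` nodes with neighborhood size `k`. -/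
def ringLattice (n k : ℕ) : Matrix (Fin n) (Fin n) ℝ :=
  Matrix.of fun i j => if 1 ≤ ringDist n i j ∧ ringDist n i j ≤ k / 2 then 1 else 0

set_option maxHeartbeats 1000000

open Finset

section Aux

lemma two_mul_three_pow_le (n : ℕ) : 2 * 3 ^ n ≤ (n + 2).factorial := by
  induction n with
  | zero => simp [Nat.factorial]
  | succ m ih =>
    calc 2 * 3 ^ (m+1) = 3 * (2 * 3 ^ m) := by ring
    _ ≤ (m + 3) * (m + 2).factorial := Nat.mul_le_mul (by omega) ih
    _ = (m + 3).factorial := rfl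

lemma exp_taylor_bound {x : ℝ} (hx : 0 ≤ x) (hx3 : x < 3) :
    Real.exp x - 1 - x ≤ x ^ 2 / (2 * (1 - x / 3)) := by
  have hsum : Summable (fun n : ℕ => x ^ n / n.factorial) := Real.summable_pow_div_factorial x
  have hexp : Real.exp x = ∑' n : ℕ, x ^ n / n.factorial := by
    rw [Real.exp_eq_exp_ℝ, NormedSpace.exp_eq_tsum_div]
  have hsum1 : Summable (fun n : ℕ => x ^ (n+1) / (n+1).factorial) :=
    (summable_nat_add_iff 1).2 hsum
  have hsum2 : Summable (fun n : ℕ => x ^ (n+2) / (n+2).factorial) :=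
    (summable_nat_add_iff 2).2 hsum
  have h0 : (∑' n : ℕ, x ^ n / n.factorial)
      = 1 + ∑' n : ℕ, x ^ (n+1) / (n+1).factorial := by
    rw [Summable.tsum_eq_zero_add hsum]; simp
  have h1 : (∑' n : ℕ, x ^ (n+1) / (n+1).factorial)
      = x + ∑' n : ℕ, x ^ (n+2) / (n+2).factorial := by
    rw [Summable.tsum_eq_zero_add hsum1]; simp
  have hgeom : Summable (fun n : ℕ => x ^ 2 / 2 * (x / 3) ^ n) :=
    (summable_geometric_of_lt_one (by positivity) (by linarith)).mul_left _
  have hterm : ∀ n : ℕ, x ^ (n+2) / (n+2).factorial ≤ x ^ 2 / 2 * (x / 3) ^ n := by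
    intro n
    have hfac : (2 * 3 ^ n : ℝ) ≤ ((n+2).factorial : ℝ) := by
      exact_mod_cast two_mul_three_pow_le n
    calc x ^ (n+2) / ((n+2).factorial : ℝ) ≤ x ^ (n+2) / (2 * 3 ^ n) := by
          gcongr
    _ = x ^ 2 / 2 * (x / 3) ^ n := by
          rw [div_pow]; ring
  have htail : (∑' n : ℕ, x ^ (n+2) / (n+2).factorial)
      ≤ ∑' n : ℕ, x ^ 2 / 2 * (x / 3) ^ n := Summable.tsum_le_tsum hterm hsum2 hgeom
  have hgeomsum : (∑' n : ℕ, x ^ 2 / 2 * (x / 3) ^ n) = x ^ 2 / 2 * (1 - x / 3)⁻¹ := by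
    rw [tsum_mul_left, tsum_geometric_of_lt_one (by positivity) (by linarith)]
  have : Real.exp x - 1 - x ≤ x ^ 2 / 2 * (1 - x / 3)⁻¹ := by
    rw [hexp, h0, h1]; linarith [htail.trans_eq hgeomsum]
  calc Real.exp x - 1 - x ≤ x ^ 2 / 2 * (1 - x / 3)⁻¹ := this
  _ = x ^ 2 / (2 * (1 - x / 3)) := by
        have h13 : (1 - x / 3) ≠ 0 := by intro h; nlinarith
        field_simp

lemma bernstein_choice (v L : ℝ) (hv : 0 < v) (hL : 0 < L) :
    ∃ l : ℝ, 0 < l ∧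
      v * (Real.exp l - 1) - l * (v + (Real.sqrt (2*v*L) + L/3)) ≤ -L := by
  show _
  set s : ℝ := Real.sqrt (2*L/v) with hs_def
  have hs : 0 < s := Real.sqrt_pos.2 (by positivity)
  have hs2 : s ^ 2 = 2*L/v := Real.sq_sqrt (by positivity)
  have hs2v : v * s ^ 2 = 2*L := by rw [hs2]; field_simp
  set w : ℝ := Real.sqrt (2*v*L) with hw_def
  have hsx : s * w = 2*L := by
    rw [hw_def, hs_def, ← Real.sqrt_mul (by positivity)]
    have : 2*L/v * (2*v*L) = (2*L)^2 := by field_simp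
    rw [this, Real.sqrt_sq (by positivity)]
  set c : ℝ := 1 + s/3 with hc_def
  have hc : 0 < c := by positivity
  have hcne : c ≠ 0 := ne_of_gt hc
  refine ⟨s / c, by positivity, ?_⟩
  set l : ℝ := s / c with hl_def
  have hl0 : 0 < l := by positivity
  have e1 : l * c = s := div_mul_cancel₀ _ hcne
  have hl3 : l < 3 := by rw [hl_def, div_lt_iff₀ hc]; rw [hc_def]; linarith
  have h1 : (1 : ℝ) - l/3 = 1/c := by
    rw [eq_div_iff hcne]; linear_combination (-1/3 : ℝ) * e1
  have hexp := exp_taylor_bound hl0.le hl3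
  have h13 : 0 < 1 - l/3 := by rw [h1]; positivity
  have key : v * (l ^ 2 / (2 * (1 - l/3))) - l * (w + L/3) = -L := by
    rw [h1, hl_def]
    rw [div_pow]
    field_simp
    linear_combination 3 * hs2v - 6 * hsx + 6 * L * hc_def
  have hmul : v * (Real.exp l - 1 - l) ≤ v * (l ^ 2 / (2 * (1 - l/3))) :=
    mul_le_mul_of_nonneg_left hexp hv.le
  nlinarith [hmul, key]

lemma mod_helper {n : ℕ} (x y : ℕ) (hx : x < n) (hy : y < n) :
    (x + n - y) % n = if y ≤ x then x - y else x + n - y := by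
  split_ifs with h
  · have : x + n - y = (x - y) + n := by omega
    rw [this, Nat.add_mod_right, Nat.mod_eq_of_lt (by omega)]
  · exact Nat.mod_eq_of_lt (by omega)

lemma ringDist_self {n : ℕ} (a : Fin n) : ringDist n a a = 0 := by
  have h : (a.val + n - a.val) % n = 0 := by
    have : a.val + n - a.val = n := by omega
    rw [this, Nat.mod_self]
  simp [ringDist, h]

lemma ringDist_comm {n : ℕ} (a b : Fin n) : ringDist n a b = ringDist n b a :=
  min_comm _ _

lemma mod_recover {n : ℕ} (a b : Fin n) :
    (a.val + (b.val + n - a.val) % n) % n = b.val := by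
  have hn : 0 < n := a.pos
  rw [mod_helper b.val a.val b.isLt a.isLt]
  split_ifs with h
  · have : a.val + (b.val - a.val) = b.val := by omega
    rw [this, Nat.mod_eq_of_lt b.isLt]
  · have : a.val + (b.val + n - a.val) = b.val + n := by omega
    rw [this, Nat.add_mod_right, Nat.mod_eq_of_lt b.isLt]

lemma uv_sum {n : ℕ} (a b : Fin n) (hne : a ≠ b) :
    (b.val + n - a.val) % n + (a.val + n - b.val) % n = n := by
  have hab : a.val ≠ b.val := fun h => hne (Fin.ext h)
  rw [mod_helper b.val a.val b.isLt a.isLt, mod_helper a.val b.val a.isLt b.isLt]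
  split_ifs <;> omega

lemma mod_add_rot {n : ℕ} (x y r : ℕ) (hx : x < n) (hy : y < n) (hr : r < n) :
    ((x + r) % n + n - (y + r) % n) % n = (x + n - y) % n := by
  have hn : 0 < n := by omega
  have hu : (x + r) % n = x + r ∨ (x + r) % n + n = x + r := by
    rcases lt_or_ge (x + r) n with h | h
    · left; exact Nat.mod_eq_of_lt h
    · right
      have h1 : (x + r) % n = (x + r - n) % n := (Nat.mod_eq_sub_mod h)
      rw [h1, Nat.mod_eq_of_lt (by omega)]; omega
  have hw : (y + r) % n = y + r ∨ (y + r) % n + n = y + r := by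
    rcases lt_or_ge (y + r) n with h | h
    · left; exact Nat.mod_eq_of_lt h
    · right
      have h1 : (y + r) % n = (y + r - n) % n := (Nat.mod_eq_sub_mod h)
      rw [h1, Nat.mod_eq_of_lt (by omega)]; omega
  set u := (x + r) % n
  set w := (y + r) % n
  have hu' : u < n := Nat.mod_lt _ hn
  have hw' : w < n := Nat.mod_lt _ hn
  have : u + n - w = x + n - y ∨ u + n - w = (x + n - y) + n ∨ (u + n - w) + n = x + n - y := by
    omega
  rcases this with h | h | h
  · rw [h]
  · rw [h, Nat.add_mod_right]
  · rw [← h, Nat.add_mod_right]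

lemma ringDist_rot {n : ℕ} [NeZero n] (a b r : Fin n) :
    ringDist n (a + r) (b + r) = ringDist n a b := by
  unfold ringDist
  rw [Fin.add_def, Fin.add_def]
  simp only []
  rw [mod_add_rot a.val b.val r.val a.isLt b.isLt r.isLt,
      mod_add_rot b.val a.val r.val b.isLt a.isLt r.isLt]

lemma ringDist_ball_card {n m : ℕ} (hmn : 2*m < n) (a : Fin n) :
    (Finset.univ.filter fun b => 1 ≤ ringDist n a b ∧ ringDist n a b ≤ m).card ≤ 2*m := by
  classical
  have hcard : (Finset.Icc 1 m ×ˢ (Finset.univ : Finset Bool)).card = 2*m := by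
    rw [Finset.card_product, Nat.card_Icc]
    simp [Finset.card_univ]; ring
  rw [← hcard]
  apply Finset.card_le_card_of_injOn
    (fun b => (ringDist n a b, decide ((b.val + n - a.val) % n ≤ m)))
  · intro b hb
    rw [Finset.mem_coe, Finset.mem_filter] at hb
    rw [Finset.mem_coe, Finset.mem_product, Finset.mem_Icc]
    exact ⟨⟨hb.2.1, hb.2.2⟩, Finset.mem_univ _⟩
  · intro b₁ hb₁ b₂ hb₂ heq
    rw [Finset.mem_coe, Finset.mem_filter] at hb₁ hb₂
    have hne₁ : a ≠ b₁ := by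
      intro h; rw [← h, ringDist_self] at hb₁; omega
    have hne₂ : a ≠ b₂ := by
      intro h; rw [← h, ringDist_self] at hb₂; omega
    have hs₁ := uv_sum a b₁ hne₁
    have hs₂ := uv_sum a b₂ hne₂
    have hd : ringDist n a b₁ = ringDist n a b₂ := congrArg Prod.fst heq
    have hside : ((b₁.val + n - a.val) % n ≤ m) ↔ ((b₂.val + n - a.val) % n ≤ m) := by
      have := congrArg Prod.snd heq
      simp only [decide_eq_decide] at this
      exact this
    have h₁ := hb₁.2
    have h₂ := hb₂.2
    have hmin1 : ringDist n a b₁ = (a.val+n-b₁.val)%n ∨ ringDist n a b₁ = (b₁.val+n-a.val)%n :=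
      min_choice _ _
    have hmin2 : ringDist n a b₂ = (a.val+n-b₂.val)%n ∨ ringDist n a b₂ = (b₂.val+n-a.val)%n :=
      min_choice _ _
    have hle1 : ringDist n a b₁ ≤ (b₁.val+n-a.val)%n := min_le_right _ _
    have hle1' : ringDist n a b₁ ≤ (a.val+n-b₁.val)%n := min_le_left _ _
    have hle2 : ringDist n a b₂ ≤ (b₂.val+n-a.val)%n := min_le_right _ _
    have hle2' : ringDist n a b₂ ≤ (a.val+n-b₂.val)%n := min_le_left _ _
    have hu : (b₁.val + n - a.val) % n = (b₂.val + n - a.val) % n := by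
      by_cases hc1 : (b₁.val + n - a.val) % n ≤ m
      · have hc2 := hside.mp hc1
        omega
      · have hc2 : ¬((b₂.val + n - a.val) % n ≤ m) := fun h => hc1 (hside.mpr h)
        omega
    have hr₁ := mod_recover a b₁
    have hr₂ := mod_recover a b₂
    rw [hu] at hr₁
    exact Fin.ext (hr₁.symm.trans hr₂)

noncomputable def pairSupport (n k : ℕ) (σ : Equiv.Perm (Fin n)) :
    Finset {q : Fin n × Fin n // q.1 < q.2} :=
  Finset.univ.filter fun e =>
    ((ringLattice n k).submatrix σ.symm σ.symm) e.1.1 e.1.2 = 1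

lemma ringLattice_01 (n k : ℕ) (a b : Fin n) :
    ringLattice n k a b = 0 ∨ ringLattice n k a b = 1 := by
  unfold ringLattice
  simp only [Matrix.of_apply]
  split_ifs <;> simp

lemma ringLattice_symm (n k : ℕ) (a b : Fin n) :
    ringLattice n k b a = ringLattice n k a b := by
  unfold ringLattice
  simp only [Matrix.of_apply]
  rw [ringDist_comm]

lemma ringLattice_diag (n k : ℕ) (a : Fin n) : ringLattice n k a a = 0 := by
  unfold ringLattice
  simp [ringDist_self]

lemma ringLattice_rot {n k : ℕ} [NeZero n] (a b r : Fin n) :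
    ringLattice n k (a + r) (b + r) = ringLattice n k a b := by
  unfold ringLattice
  simp [ringDist_rot]

-- deterministic sum identity
lemma sum_pairs {n k : ℕ} (σ : Equiv.Perm (Fin n)) (M : Matrix (Fin n) (Fin n) ℝ)
    (hMsymm : M.IsSymm) :
    ∑ i : Fin n, ∑ j : Fin n, ((ringLattice n k).submatrix σ.symm σ.symm) i j * M i j
      = 2 * ∑ e ∈ pairSupport n k σ, M e.1.1 e.1.2 := by
  classical
  set B : Matrix (Fin n) (Fin n) ℝ := (ringLattice n k).submatrix σ.symm σ.symm with hB
  have hB01 : ∀ i j, B i j = 0 ∨ B i j = 1 := fun i j => ringLattice_01 n k _ _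
  have hBsymm : ∀ i j, B j i = B i j := fun i j => ringLattice_symm n k _ _
  have hBdiag : ∀ i, B i i = 0 := fun i => ringLattice_diag n k _
  have hMsymm' : ∀ i j, M j i = M i j := fun i j => by
    have := congrFun (congrFun hMsymm j) i
    simpa [Matrix.transpose_apply] using this.symm
  set g : Fin n × Fin n → ℝ := fun q => B q.1 q.2 * M q.1 q.2 with hg
  have step1 : ∑ i : Fin n, ∑ j : Fin n, B i j * M i j = ∑ q ∈ (univ : Finset (Fin n × Fin n)), g q := by
    rw [← Finset.univ_product_univ, Finset.sum_product]
  have step2 : ∑ q ∈ (univ : Finset (Fin n × Fin n)), g q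
      = ∑ q ∈ univ.filter (fun q : Fin n × Fin n => q.1 < q.2), g q
        + ∑ q ∈ univ.filter (fun q : Fin n × Fin n => ¬ q.1 < q.2), g q :=
    (Finset.sum_filter_add_sum_filter_not _ _ _).symm
  have step3 : ∑ q ∈ univ.filter (fun q : Fin n × Fin n => ¬ q.1 < q.2), g q
      = ∑ q ∈ univ.filter (fun q : Fin n × Fin n => q.2 < q.1), g q := by
    rw [← Finset.sum_filter_add_sum_filter_not
      (univ.filter (fun q : Fin n × Fin n => ¬ q.1 < q.2)) (fun q => q.2 < q.1) g]
    have hzero : ∑ q ∈ (univ.filter (fun q : Fin n × Fin n => ¬ q.1 < q.2)).filter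
        (fun q => ¬ q.2 < q.1), g q = 0 := by
      apply Finset.sum_eq_zero
      intro q hq
      simp only [Finset.mem_filter] at hq
      have : q.1 = q.2 := le_antisymm (not_lt.1 hq.2) (not_lt.1 hq.1.2)
      rw [hg]
      simp only []
      rw [← this, hBdiag, zero_mul]
    have hmerge : (univ.filter (fun q : Fin n × Fin n => ¬ q.1 < q.2)).filter
        (fun q => q.2 < q.1) = univ.filter (fun q : Fin n × Fin n => q.2 < q.1) := by
      rw [Finset.filter_filter]
      apply Finset.filter_congr
      intro q _
      constructor
      · exact fun h => h.2
      · exact fun h => ⟨lt_asymm h, h⟩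
    rw [hmerge, hzero, add_zero]
  have step4 : ∑ q ∈ univ.filter (fun q : Fin n × Fin n => q.2 < q.1), g q
      = ∑ q ∈ univ.filter (fun q : Fin n × Fin n => q.1 < q.2), g q := by
    apply Finset.sum_nbij' (i := Prod.swap) (j := Prod.swap)
    · intro a ha; simp only [Finset.mem_filter, Finset.mem_univ, true_and] at ha ⊢
      exact ha
    · intro a ha; simp only [Finset.mem_filter, Finset.mem_univ, true_and] at ha ⊢
      exact ha
    · intro a _; exact Prod.swap_swap a
    · intro a _; exact Prod.swap_swap a
    · intro q _
      show B q.1 q.2 * M q.1 q.2 = B q.2 q.1 * M q.2 q.1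
      rw [hBsymm q.2 q.1, hMsymm' q.2 q.1]
  have step5 : ∑ q ∈ univ.filter (fun q : Fin n × Fin n => q.1 < q.2), g q
      = ∑ e ∈ pairSupport n k σ, M e.1.1 e.1.2 := by
    rw [Finset.sum_subtype (p := fun q : Fin n × Fin n => q.1 < q.2) _ (by simp) g]
    unfold pairSupport
    rw [← Finset.sum_filter_add_sum_filter_not (univ : Finset {q : Fin n × Fin n // q.1 < q.2})
      (fun e => B e.1.1 e.1.2 = 1) (fun e => g e.val)]
    have h2 : ∑ e ∈ (univ : Finset {q : Fin n × Fin n // q.1 < q.2}).filter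
        (fun e => ¬ B e.1.1 e.1.2 = 1), g e.val = 0 := by
      apply Finset.sum_eq_zero
      intro e he
      simp only [Finset.mem_filter] at he
      rcases hB01 e.1.1 e.1.2 with h | h
      · show B e.1.1 e.1.2 * M e.1.1 e.1.2 = 0
        rw [h, zero_mul]
      · exact absurd h he.2
    rw [h2, add_zero]
    apply Finset.sum_congr rfl
    intro e he
    simp only [Finset.mem_filter] at he
    show B e.1.1 e.1.2 * M e.1.1 e.1.2 = M e.1.1 e.1.2
    rw [he.2, one_mul]
  rw [step1, step2, step3, step4, step5]
  ring

lemma pairSupport_card {n k : ℕ} (hk : 0 < k) (hkn : k < n) (hke : Even k)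
    (σ : Equiv.Perm (Fin n)) : 2 * (pairSupport n k σ).card ≤ n * k := by
  classical
  set B : Matrix (Fin n) (Fin n) ℝ := (ringLattice n k).submatrix σ.symm σ.symm with hB
  set T : Finset (Fin n × Fin n) := univ.filter (fun q => B q.1 q.2 = 1) with hT
  have hstepA : 2 * (pairSupport n k σ).card ≤ T.card := by
    set im1 := (pairSupport n k σ).image (fun e => e.val) with him1
    set im2 := (pairSupport n k σ).image (fun e => e.val.swap) with him2
    have hc1 : im1.card = (pairSupport n k σ).card :=
      Finset.card_image_of_injective _ Subtype.val_injective
    have hc2 : im2.card = (pairSupport n k σ).card :=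
      Finset.card_image_of_injective _ (Prod.swap_injective.comp Subtype.val_injective)
    have hdisj : Disjoint im1 im2 := by
      rw [Finset.disjoint_left]
      intro q hq1 hq2
      rw [him1, Finset.mem_image] at hq1
      rw [him2, Finset.mem_image] at hq2
      obtain ⟨e1, _, he1⟩ := hq1
      obtain ⟨e2, _, he2⟩ := hq2
      have p1 : q.1 < q.2 := he1 ▸ e1.2
      have p2 : q.2 < q.1 := by
        have := e2.2
        rw [← he2]
        exact this
      exact absurd p2 (lt_asymm p1)
    have hsub : im1 ∪ im2 ⊆ T := by
      intro q hq
      rw [Finset.mem_union] at hq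
      rw [hT, Finset.mem_filter]
      refine ⟨Finset.mem_univ _, ?_⟩
      rcases hq with hq | hq
      · rw [him1, Finset.mem_image] at hq
        obtain ⟨e, he, hee⟩ := hq
        unfold pairSupport at he
        rw [Finset.mem_filter] at he
        rw [← hee]
        exact he.2
      · rw [him2, Finset.mem_image] at hq
        obtain ⟨e, he, hee⟩ := hq
        unfold pairSupport at he
        rw [Finset.mem_filter] at he
        rw [← hee]
        show ringLattice n k (σ.symm e.val.2) (σ.symm e.val.1) = 1
        rw [ringLattice_symm]
        exact he.2
    calc 2 * (pairSupport n k σ).card = im1.card + im2.card := by rw [hc1, hc2]; ring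
    _ = (im1 ∪ im2).card := (Finset.card_union_of_disjoint hdisj).symm
    _ ≤ T.card := Finset.card_le_card hsub
  have hstepB : T.card ≤ n * k := by
    rw [Finset.card_eq_sum_card_fiberwise
      (f := Prod.fst) (t := (univ : Finset (Fin n)))
      (fun q _ => Finset.mem_univ _)]
    have hfib : ∀ i : Fin n, (T.filter fun q => q.1 = i).card ≤ k := by
      intro i
      have hball := ringDist_ball_card (n := n) (m := k/2)
        (by rw [Nat.two_mul_div_two_of_even hke]; exact hkn) (σ.symm i)
      calc (T.filter fun q => q.1 = i).card
          ≤ (univ.filter fun b =>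
              1 ≤ ringDist n (σ.symm i) b ∧ ringDist n (σ.symm i) b ≤ k/2).card := by
            apply Finset.card_le_card_of_injOn (fun q => σ.symm q.2)
            · intro q hq
              rw [Finset.mem_coe, Finset.mem_filter] at hq ⊢
              obtain ⟨hqT, hqi⟩ := hq
              rw [hT, Finset.mem_filter] at hqT
              have hB1 : B q.1 q.2 = 1 := hqT.2
              rw [hB, Matrix.submatrix_apply] at hB1
              unfold ringLattice at hB1
              rw [Matrix.of_apply] at hB1
              refine ⟨Finset.mem_univ _, ?_⟩
              by_contra hcond
              rw [if_neg] at hB1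
              · exact one_ne_zero hB1.symm
              · rw [hqi]
                exact hcond
            · intro q1 hq1 q2 hq2 heq
              rw [Finset.mem_coe, Finset.mem_filter] at hq1 hq2
              have h2 : q1.2 = q2.2 := σ.symm.injective heq
              have h1 : q1.1 = q2.1 := by rw [hq1.2, hq2.2]
              exact Prod.ext h1 h2
      _ ≤ 2 * (k/2) := hball
      _ ≤ k := by omega
    calc ∑ i : Fin n, (T.filter fun q => q.1 = i).card ≤ ∑ _i : Fin n, k :=
          Finset.sum_le_sum fun i _ => hfib i
    _ = n * k := by simp [Finset.card_univ, mul_comm]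
  omega

lemma pairSupport_rot {n k : ℕ} [NeZero n] (σ : Equiv.Perm (Fin n)) (r : Fin n) :
    pairSupport n k ((σ.symm.trans (Equiv.addRight r)).symm) = pairSupport n k σ := by
  unfold pairSupport
  apply Finset.filter_congr
  intro e _
  rw [Matrix.submatrix_apply, Matrix.submatrix_apply, Equiv.symm_symm,
    Equiv.trans_apply, Equiv.trans_apply]
  show ringLattice n k ((σ.symm e.val.1) + r) ((σ.symm e.val.2) + r) = 1 ↔ _
  rw [ringLattice_rot]

lemma pairSupport_image_card {n k : ℕ} (hn : 2 ≤ n) :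
    ((Finset.univ.image (pairSupport n k)) :
      Finset (Finset {q : Fin n × Fin n // q.1 < q.2})).card ≤ (n-1).factorial := by
  classical
  haveI : NeZero n := ⟨by omega⟩
  have hfiber : ∀ s ∈ univ.image (pairSupport n k),
      n ≤ (univ.filter fun σ => pairSupport n k σ = s).card := by
    intro s hs
    obtain ⟨σ₀, _, hσ₀⟩ := Finset.mem_image.1 hs
    have hinj : Set.InjOn (fun r : Fin n => (σ₀.symm.trans (Equiv.addRight r)).symm)
        (univ : Finset (Fin n)) := by
      intro r₁ _ r₂ _ h
      have h2 : σ₀.symm.trans (Equiv.addRight r₁) = σ₀.symm.trans (Equiv.addRight r₂) := by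
        have := congrArg Equiv.symm h
        simpa using this
      have h3 := congrArg (fun τ : Fin n ≃ Fin n => τ (σ₀ 0)) h2
      simpa using h3
    have hmaps : ∀ r : Fin n, r ∈ (univ : Finset (Fin n)) →
        (σ₀.symm.trans (Equiv.addRight r)).symm ∈ (univ.filter fun σ => pairSupport n k σ = s) := by
      intro r _
      rw [Finset.mem_filter]
      exact ⟨Finset.mem_univ _, by rw [pairSupport_rot]; exact hσ₀⟩
    calc n = (univ : Finset (Fin n)).card := by simp
    _ ≤ _ := Finset.card_le_card_of_injOn _ hmaps hinj
  have hsum := Finset.card_eq_sum_card_fiberwise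
    (f := pairSupport n k) (s := (univ : Finset (Equiv.Perm (Fin n))))
    (t := univ.image (pairSupport n k))
    (fun σ _ => Finset.mem_image_of_mem _ (Finset.mem_univ σ))
  have hcardperm : (univ : Finset (Equiv.Perm (Fin n))).card = n.factorial := by
    rw [Finset.card_univ, Fintype.card_perm, Fintype.card_fin]
  have hge : (univ.image (pairSupport n k)).card * n ≤ n.factorial := by
    calc (univ.image (pairSupport n k)).card * n
        = ∑ _s ∈ univ.image (pairSupport n k), n := by rw [Finset.sum_const, smul_eq_mul]
    _ ≤ ∑ s ∈ univ.image (pairSupport n k),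
          (univ.filter fun σ => pairSupport n k σ = s).card :=
        Finset.sum_le_sum hfiber
    _ = n.factorial := by rw [← hsum, hcardperm]
  have hfac : n.factorial = (n-1).factorial * n := by
    rw [mul_comm, Nat.mul_factorial_pred (by omega)]
  rw [hfac] at hge
  exact Nat.le_of_mul_le_mul_right hge (by omega)

lemma chernoff_bernoulli {Ω : Type*} [MeasurableSpace Ω] (μ : Measure Ω) [IsProbabilityMeasure μ]
    {ι : Type*} (X : ι → Ω → ℝ) (hmeas : ∀ i, Measurable (X i))
    (h01 : ∀ i ω, X i ω = 0 ∨ X i ω = 1)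
    (p : ℝ) (hp0 : 0 ≤ p) (hp1 : p ≤ 1)
    (hber : ∀ i, μ {ω | X i ω = 1} = ENNReal.ofReal p)
    (hindep : iIndepFun X μ)
    (s : Finset ι) (v L : ℝ) (hv : 0 < v) (hL : 0 < L) (hcard : (s.card : ℝ) * p ≤ v) :
    μ {ω | v + (Real.sqrt (2*v*L) + L/3) ≤ ∑ i ∈ s, X i ω} ≤
      ENNReal.ofReal (Real.exp (-L)) := by
  obtain ⟨l, hl0, hkey⟩ := bernstein_choice v L hv hL
  set a : ℝ := v + (Real.sqrt (2*v*L) + L/3) with ha_def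
  have hXbd : ∀ i ω, 0 ≤ X i ω ∧ X i ω ≤ 1 := by
    intro i ω; rcases h01 i ω with h | h <;> simp [h]
  -- integral of X i
  have hXint : ∀ i, Integrable (X i) μ := by
    intro i
    refine (integrable_const (1:ℝ)).mono' (hmeas i).aestronglyMeasurable
      (ae_of_all _ fun ω => ?_)
    rw [Real.norm_eq_abs, abs_le]
    exact ⟨by linarith [(hXbd i ω).1], (hXbd i ω).2⟩
  have hXmean : ∀ i, ∫ ω, X i ω ∂μ = p := by
    intro i
    have hset : MeasurableSet {ω | X i ω = 1} := (hmeas i) (measurableSet_singleton 1)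
    have hfun : (fun ω => X i ω) = Set.indicator {ω | X i ω = 1} (fun _ => (1:ℝ)) := by
      funext ω
      rcases h01 i ω with h | h
      · rw [h, Set.indicator_apply]
        have : ω ∉ {ω | X i ω = 1} := by simp [Set.mem_setOf_eq, h]
        simp [this]
      · rw [h, Set.indicator_apply]
        have : ω ∈ {ω | X i ω = 1} := h
        simp [this]
    rw [hfun, integral_indicator_const (1:ℝ) hset, measureReal_def, hber i, smul_eq_mul, mul_one,
      ENNReal.toReal_ofReal hp0]
  have hmgf_single : ∀ i, mgf (X i) μ l = 1 + p * (Real.exp l - 1) := by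
    intro i
    have hrw : (fun ω => Real.exp (l * X i ω))
        = fun ω => 1 + (Real.exp l - 1) * X i ω := by
      funext ω
      rcases h01 i ω with h | h <;> simp [h]
    rw [mgf, hrw]
    rw [integral_add (integrable_const _) ((hXint i).const_mul _)]
    rw [integral_const_mul, hXmean i]
    simp [measure_univ]
    ring
  have hmgf_sum : mgf (∑ i ∈ s, X i) μ l = (1 + p * (Real.exp l - 1)) ^ s.card := by
    rw [hindep.mgf_sum hmeas s]
    rw [Finset.prod_congr rfl fun i _ => hmgf_single i, Finset.prod_const]
  have hel1 : 0 ≤ Real.exp l - 1 := by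
    have := Real.one_le_exp hl0.le
    linarith
  have hbase_nonneg : 0 ≤ 1 + p * (Real.exp l - 1) := by positivity
  have hmgf_le : mgf (∑ i ∈ s, X i) μ l ≤ Real.exp (v * (Real.exp l - 1)) := by
    rw [hmgf_sum]
    calc (1 + p * (Real.exp l - 1)) ^ s.card
        ≤ (Real.exp (p * (Real.exp l - 1))) ^ s.card := by
          apply pow_le_pow_left₀ hbase_nonneg
          linarith [Real.add_one_le_exp (p * (Real.exp l - 1))]
    _ = Real.exp ((s.card : ℝ) * (p * (Real.exp l - 1))) := by
          rw [← Real.exp_nat_mul]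
    _ ≤ Real.exp (v * (Real.exp l - 1)) := by
          apply Real.exp_le_exp.2
          calc (s.card : ℝ) * (p * (Real.exp l - 1)) = ((s.card : ℝ) * p) * (Real.exp l - 1) := by
                ring
          _ ≤ v * (Real.exp l - 1) := mul_le_mul_of_nonneg_right hcard hel1
  -- integrability of exp (l * sum)
  have hsum_meas : Measurable (fun ω => ∑ i ∈ s, X i ω) := by
    exact Finset.measurable_sum s fun i _ => hmeas i
  have hint : Integrable (fun ω => Real.exp (l * (∑ i ∈ s, X i) ω)) μ := by
    refine (integrable_const (Real.exp (l * s.card))).mono'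
      ?_ (ae_of_all _ fun ω => ?_)
    · have : (fun ω => Real.exp (l * (∑ i ∈ s, X i) ω))
          = fun ω => Real.exp (l * ∑ i ∈ s, X i ω) := by
        funext ω; rw [Finset.sum_apply]
      rw [this]
      exact ((hsum_meas.const_mul l).exp).aestronglyMeasurable
    · rw [Real.norm_eq_abs, Real.abs_exp]
      apply Real.exp_le_exp.2
      have hle : (∑ i ∈ s, X i) ω ≤ s.card := by
        rw [Finset.sum_apply]
        calc ∑ i ∈ s, X i ω ≤ ∑ i ∈ s, (1:ℝ) := Finset.sum_le_sum fun i _ => (hXbd i ω).2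
        _ = s.card := by simp
      exact mul_le_mul_of_nonneg_left hle hl0.le
  have hch := measure_ge_le_exp_mul_mgf (μ := μ) (X := ∑ i ∈ s, X i) a hl0.le hint
  have hbound : (μ {ω | a ≤ (∑ i ∈ s, X i) ω}).toReal ≤ Real.exp (-L) := by
    refine hch.trans ?_
    calc Real.exp (-l*a) * mgf (∑ i ∈ s, X i) μ l
        ≤ Real.exp (-l*a) * Real.exp (v*(Real.exp l - 1)) :=
          mul_le_mul_of_nonneg_left hmgf_le (Real.exp_nonneg _)
    _ = Real.exp (v*(Real.exp l - 1) - l*a) := by rw [← Real.exp_add]; ring_nf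
    _ ≤ Real.exp (-L) := Real.exp_le_exp.2 (by linarith [hkey])
  have hseteq : {ω | a ≤ ∑ i ∈ s, X i ω} = {ω | a ≤ (∑ i ∈ s, X i) ω} := by
    ext ω; simp [Finset.sum_apply]
  rw [hseteq]
  calc μ {ω | a ≤ (∑ i ∈ s, X i) ω}
      = ENNReal.ofReal ((μ {ω | a ≤ (∑ i ∈ s, X i) ω}).toReal) :=
        (ENNReal.ofReal_toReal (measure_ne_top _ _)).symm
  _ ≤ ENNReal.ofReal (Real.exp (-L)) := ENNReal.ofReal_le_ofReal hbound


end Aux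

/-- For an Erdős–Rényi random adjacency matrix `A ~ ER(n, k/(n-1))`, with probability at
least `1 - 1/n`, the maximum-likelihood statistic `T₁(A) = max_π ⟨P_π B P_π^T, A⟩`
satisfies `T₁(A) ≤ (k/(n-1))·nk + 2√((k/(n-1))·nk·log n!) + (2/3)·log n!`. -/
theorem maxlik_statistic_null_bound {Ω : Type*} [MeasurableSpace Ω] (μ : Measure Ω)
    [IsProbabilityMeasure μ] (n k : ℕ) (hn : 2 ≤ n) (hk : 0 < k) (hkn : k < n)
    (hke : Even k) (A : Ω → Matrix (Fin n) (Fin n) ℝ)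
    (hmeas : ∀ i j, Measurable fun ω => A ω i j)
    (hsymm : ∀ ω, (A ω).IsSymm) (hdiag : ∀ ω i, A ω i i = 0)
    (h01 : ∀ ω i j, A ω i j = 0 ∨ A ω i j = 1)
    (hber : ∀ i j : Fin n, i < j →
      μ {ω | A ω i j = 1} = ENNReal.ofReal ((k : ℝ) / (n - 1)))
    (hindep : iIndepFun
      (fun (e : {q : Fin n × Fin n // q.1 < q.2}) ω => A ω e.1.1 e.1.2) μ) :
    ENNReal.ofReal (1 - 1 / (n : ℝ)) ≤
      μ {ω | ∀ σ : Equiv.Perm (Fin n),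
        ∑ i : Fin n, ∑ j : Fin n,
            ((ringLattice n k).submatrix σ.symm σ.symm) i j * A ω i j ≤
          ((k : ℝ) / (n - 1)) * n * k +
            2 * Real.sqrt (((k : ℝ) / (n - 1)) * n * k * Real.log (n.factorial)) +
              (2 / 3) * Real.log (n.factorial)} := by
  classical
  haveI : NeZero n := ⟨by omega⟩
  set p : ℝ := (k : ℝ) / (↑n - 1) with hp_def
  set L : ℝ := Real.log (n.factorial) with hLdef
  have hn1 : (1:ℝ) ≤ (n:ℝ) - 1 := by
    have h2 : (2:ℝ) ≤ (n:ℝ) := by exact_mod_cast hn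
    linarith
  have hk' : (0:ℝ) < k := by exact_mod_cast hk
  have hn' : (0:ℝ) < n := by linarith
  have hp0 : 0 < p := div_pos hk' (by linarith)
  have hp1 : p ≤ 1 := by
    rw [hp_def, div_le_one (by linarith)]
    have : (k:ℝ) + 1 ≤ (n:ℝ) := by exact_mod_cast hkn
    linarith
  have hfacpos : (0:ℝ) < (n.factorial : ℝ) := by
    exact_mod_cast n.factorial_pos
  have hL : 0 < L := by
    rw [hLdef]
    apply Real.log_pos
    have h2 : (2:ℕ) ≤ n.factorial := le_trans hn (Nat.self_le_factorial n)
    exact_mod_cast lt_of_lt_of_le Nat.one_lt_two h2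
  set v : ℝ := p * ↑n * ↑k / 2 with hvdef
  have hv : 0 < v := by
    rw [hvdef]
    apply div_pos (mul_pos (mul_pos hp0 hn') hk') two_pos
  set a : ℝ := v + (Real.sqrt (2*v*L) + L/3) with hadef
  have hsqrt : Real.sqrt (p * ↑n * ↑k * L) = Real.sqrt (2*v*L) := by
    rw [hvdef]; congr 1; ring
  have hthr2a : p * ↑n * ↑k + 2 * Real.sqrt (p * ↑n * ↑k * L) + 2/3 * L = 2 * a := by
    rw [hadef, hsqrt, hvdef]; ring
  set X : {q : Fin n × Fin n // q.1 < q.2} → Ω → ℝ :=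
    fun e ω => A ω e.1.1 e.1.2 with hXdef
  have hX01 : ∀ e ω, X e ω = 0 ∨ X e ω = 1 := fun e ω => h01 ω _ _
  have hXmeas : ∀ e, Measurable (X e) := fun e => hmeas _ _
  have hXber : ∀ e, μ {ω | X e ω = 1} = ENNReal.ofReal p := fun e => hber _ _ e.2
  set G : Set Ω := {ω | ∀ σ : Equiv.Perm (Fin n),
      ∑ i : Fin n, ∑ j : Fin n,
          ((ringLattice n k).submatrix σ.symm σ.symm) i j * A ω i j ≤
        p * ↑n * ↑k + 2 * Real.sqrt (p * ↑n * ↑k * L) + 2 / 3 * L} with hGdef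
  show ENNReal.ofReal (1 - 1 / (n : ℝ)) ≤ μ G
  have hsum_meas : ∀ σ : Equiv.Perm (Fin n), Measurable (fun ω =>
      ∑ i : Fin n, ∑ j : Fin n,
        ((ringLattice n k).submatrix σ.symm σ.symm) i j * A ω i j) := by
    intro σ
    apply Finset.measurable_sum
    intro i _
    apply Finset.measurable_sum
    intro j _
    exact (hmeas i j).const_mul _
  have hGmeas : MeasurableSet G := by
    have : G = ⋂ σ : Equiv.Perm (Fin n), {ω |
        ∑ i : Fin n, ∑ j : Fin n,
          ((ringLattice n k).submatrix σ.symm σ.symm) i j * A ω i j ≤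
        p * ↑n * ↑k + 2 * Real.sqrt (p * ↑n * ↑k * L) + 2 / 3 * L} := by
      rw [hGdef]; ext ω; simp [Set.mem_iInter, Set.mem_setOf_eq]
    rw [this]
    exact MeasurableSet.iInter fun σ =>
      measurableSet_le (hsum_meas σ) measurable_const
  have hcompl : Gᶜ ⊆ ⋃ s ∈ (univ.image (pairSupport n k) :
      Finset (Finset {q : Fin n × Fin n // q.1 < q.2})),
      {ω | a ≤ ∑ e ∈ s, X e ω} := by
    intro ω hω
    rw [hGdef] at hω
    simp only [Set.mem_compl_iff, Set.mem_setOf_eq, not_forall, not_le] at hω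
    obtain ⟨σ, hσ⟩ := hω
    have hsp := sum_pairs (k := k) σ (A ω) (hsymm ω)
    rw [hsp, hthr2a] at hσ
    rw [Set.mem_iUnion₂]
    refine ⟨pairSupport n k σ, Finset.mem_image_of_mem _ (Finset.mem_univ σ), ?_⟩
    rw [Set.mem_setOf_eq]
    have : a < ∑ e ∈ pairSupport n k σ, A ω e.1.1 e.1.2 := by linarith
    exact this.le
  have hmain : μ Gᶜ ≤ ENNReal.ofReal (1/(n:ℝ)) := by
    have hexpL : Real.exp (-L) = ((n.factorial : ℝ))⁻¹ := by
      rw [hLdef, Real.exp_neg, Real.exp_log hfacpos]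
    calc μ Gᶜ ≤ μ (⋃ s ∈ (univ.image (pairSupport n k) :
          Finset (Finset {q : Fin n × Fin n // q.1 < q.2})),
          {ω | a ≤ ∑ e ∈ s, X e ω}) := measure_mono hcompl
    _ ≤ ∑ s ∈ (univ.image (pairSupport n k) :
          Finset (Finset {q : Fin n × Fin n // q.1 < q.2})),
          μ {ω | a ≤ ∑ e ∈ s, X e ω} := measure_biUnion_finset_le _ _
    _ ≤ ∑ _s ∈ (univ.image (pairSupport n k) :
          Finset (Finset {q : Fin n × Fin n // q.1 < q.2})),
          ENNReal.ofReal (Real.exp (-L)) := by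
        apply Finset.sum_le_sum
        intro s hs
        obtain ⟨σ, _, hσ⟩ := Finset.mem_image.1 hs
        have hcard : ((s.card : ℝ)) * p ≤ v := by
          have h2 : 2 * s.card ≤ n * k := by
            rw [← hσ]; exact pairSupport_card hk hkn hke σ
          have h2' : (s.card : ℝ) ≤ (n : ℝ) * k / 2 := by
            have : ((2 * s.card : ℕ) : ℝ) ≤ ((n * k : ℕ) : ℝ) := by exact_mod_cast h2
            push_cast at this
            linarith
          calc ((s.card : ℝ)) * p ≤ ((n : ℝ) * k / 2) * p := by
                apply mul_le_mul_of_nonneg_right h2' hp0.le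
          _ = v := by rw [hvdef]; ring
        have hch := chernoff_bernoulli μ X hXmeas hX01 p hp0.le hp1 hXber hindep
          s v L hv hL hcard
        rwa [← hadef] at hch
    _ = (univ.image (pairSupport n k) :
          Finset (Finset {q : Fin n × Fin n // q.1 < q.2})).card •
          ENNReal.ofReal (Real.exp (-L)) := Finset.sum_const _
    _ ≤ (((n-1).factorial : ℕ) : ENNReal) * ENNReal.ofReal (Real.exp (-L)) := by
        rw [nsmul_eq_mul]
        apply mul_le_mul_left
        exact_mod_cast Nat.cast_le.2 (pairSupport_image_card hn)
    _ = ENNReal.ofReal (((n-1).factorial : ℝ) * Real.exp (-L)) := by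
        rw [ENNReal.ofReal_mul (by positivity), ENNReal.ofReal_natCast]
    _ = ENNReal.ofReal (1/(n:ℝ)) := by
        congr 1
        rw [hexpL]
        have hfac : ((n.factorial : ℕ) : ℝ) = (n : ℝ) * ((n-1).factorial : ℝ) := by
          rw [← Nat.mul_factorial_pred (show n ≠ 0 by omega)]
          push_cast
          ring
        rw [hfac]
        have hfp : (0:ℝ) < ((n-1).factorial : ℝ) := by exact_mod_cast (n-1).factorial_pos
        field_simp
  have h1 : μ G = 1 - μ Gᶜ := by
    have h2 := prob_compl_eq_one_sub (μ := μ) hGmeas.compl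
    rw [compl_compl] at h2
    rw [h2]
  calc ENNReal.ofReal (1 - 1/(n:ℝ))
      = ENNReal.ofReal 1 - ENNReal.ofReal (1/(n:ℝ)) := ENNReal.ofReal_sub _ (by positivity)
  _ = 1 - ENNReal.ofReal (1/(n:ℝ)) := by rw [ENNReal.ofReal_one]
  _ ≤ 1 - μ Gᶜ := tsub_le_tsub_left hmain 1
  _ = μ G := h1.symm
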